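/- arXiv:2211.09594 — 2 statements merged into one kernel-verified Lean document; each statement's English description precedes it below -/
import Mathlib

section
/- Let X_n = Σ_{i=0}^∞ a_i ε_{n−i} be a linear process with Σ_{i=0}^∞ |a_i|^γ < ∞ for some γ ∈ (0,1], and suppose E|e^{iλε₁} − φ_ε(λ)|² ≤ c₀(|λ|^{2γ} ∧ 1) for all λ ∈ ℝ and some constant c₀ > 0. Then there exists a constant c > 0 such that for all u, v ∈ ℝ: |H_{11}(u,v)| ≤ c |uv|^γ |φ_ε(u a₀) φ_ε(v a₀)| + c (|uv|^γ ∧ 1) ∏_{ℓ=1}^∞ |φ_ε((u+v) a_ℓ)|. -/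
open MeasureTheory ProbabilityTheory Complex

/-- The characteristic function of a real random variable `Y` on `(Ω, μ)`:
`t ↦ E[exp(I t Y)]`. -/
noncomputable def charFn {Ω : Type*} [MeasurableSpace Ω] (μ : Measure Ω) (Y : Ω → ℝ) (t : ℝ) : ℂ :=
  ∫ ω, Complex.exp (Complex.I * (t * Y ω : ℝ)) ∂μ

/-- `H_{ij}(u,v) = E[e^{iuX_i + ivX_j}] − φ(u)φ(v)` where `φ` is the characteristic function
of `X_1`. -/
noncomputable def Hfun {Ω : Type*} [MeasurableSpace Ω] (μ : Measure Ω) (X : ℤ → Ω → ℝ)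
    (i j : ℕ) (u v : ℝ) : ℂ :=
  (∫ ω, Complex.exp (Complex.I * (u * X i ω + v * X j ω : ℝ)) ∂μ)
    - charFn μ (X 1) u * charFn μ (X 1) v

section Aux

open Filter Finset

variable {Ω : Type*} [MeasurableSpace Ω] {μ : Measure Ω}

lemma norm_exp_I_mul_ofReal (x : ℝ) : ‖Complex.exp (Complex.I * (x : ℂ))‖ = 1 := by
  rw [mul_comm]; exact Complex.norm_exp_ofReal_mul_I x

lemma asm_exp_I {A : Ω → ℝ} (hA : Measurable A) :
    AEStronglyMeasurable (fun ω => Complex.exp (Complex.I * (A ω : ℂ))) μ :=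
  (Complex.measurable_exp.comp
    ((Complex.measurable_ofReal.comp hA).const_mul Complex.I)).aestronglyMeasurable

lemma integrable_exp_I [IsFiniteMeasure μ] {A : Ω → ℝ} (hA : Measurable A) :
    Integrable (fun ω => Complex.exp (Complex.I * (A ω : ℂ))) μ := by
  refine ⟨asm_exp_I hA, ?_⟩
  refine HasFiniteIntegral.of_bounded (C := 1) ?_
  filter_upwards with ω
  exact le_of_eq (_root_.norm_exp_I_mul_ofReal _)

lemma norm_charFn_le_one [IsProbabilityMeasure μ] (Y : Ω → ℝ) (t : ℝ) :
    ‖charFn μ Y t‖ ≤ 1 := by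
  have h := norm_integral_le_of_norm_le_const (μ := μ) (C := 1)
    (f := fun ω => Complex.exp (Complex.I * ((t * Y ω : ℝ) : ℂ)))
    (by filter_upwards with ω; exact le_of_eq (_root_.norm_exp_I_mul_ofReal _))
  simpa [charFn] using h

/-- independence implies the expected product of the complex exponentials factorizes -/
lemma indep_exp_mul [IsProbabilityMeasure μ] {A B : Ω → ℝ}
    (hA : Measurable A) (hB : Measurable B) (h : IndepFun A B μ) :
    ∫ ω, Complex.exp (Complex.I * (A ω : ℂ)) * Complex.exp (Complex.I * (B ω : ℂ)) ∂μ
      = (∫ ω, Complex.exp (Complex.I * (A ω : ℂ)) ∂μ)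
        * ∫ ω, Complex.exp (Complex.I * (B ω : ℂ)) ∂μ := by
  have hmap : μ.map (fun ω => (A ω, B ω)) = (μ.map A).prod (μ.map B) :=
    (indepFun_iff_map_prod_eq_prod_map_map hA.aemeasurable hB.aemeasurable).1 h
  have hABm : AEMeasurable (fun ω => (A ω, B ω)) μ := (hA.prodMk hB).aemeasurable
  have hcont : Continuous fun p : ℝ × ℝ =>
      Complex.exp (Complex.I * (p.1 : ℂ)) * Complex.exp (Complex.I * (p.2 : ℂ)) := by
    fun_prop
  have hcont1 : Continuous fun x : ℝ => Complex.exp (Complex.I * (x : ℂ)) := by fun_prop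
  haveI : IsProbabilityMeasure (μ.map A) := Measure.isProbabilityMeasure_map hA.aemeasurable
  haveI : IsProbabilityMeasure (μ.map B) := Measure.isProbabilityMeasure_map hB.aemeasurable
  calc ∫ ω, Complex.exp (Complex.I * (A ω : ℂ)) * Complex.exp (Complex.I * (B ω : ℂ)) ∂μ
      = ∫ p : ℝ × ℝ, Complex.exp (Complex.I * (p.1 : ℂ)) * Complex.exp (Complex.I * (p.2 : ℂ))
          ∂(μ.map fun ω => (A ω, B ω)) :=
        (integral_map hABm hcont.aestronglyMeasurable).symm
    _ = ∫ p : ℝ × ℝ, Complex.exp (Complex.I * (p.1 : ℂ)) * Complex.exp (Complex.I * (p.2 : ℂ))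
          ∂((μ.map A).prod (μ.map B)) := by rw [hmap]
    _ = (∫ x, Complex.exp (Complex.I * (x : ℂ)) ∂(μ.map A))
          * ∫ y, Complex.exp (Complex.I * (y : ℂ)) ∂(μ.map B) :=
        integral_prod_mul (f := fun x : ℝ => Complex.exp (Complex.I * (x : ℂ)))
          (g := fun y : ℝ => Complex.exp (Complex.I * (y : ℂ)))
    _ = (∫ ω, Complex.exp (Complex.I * (A ω : ℂ)) ∂μ)
          * ∫ ω, Complex.exp (Complex.I * (B ω : ℂ)) ∂μ := by
        rw [integral_map hA.aemeasurable hcont1.aestronglyMeasurable,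
          integral_map hB.aemeasurable hcont1.aestronglyMeasurable]

/-- reindexing an independent family along an injection -/
lemma iIndepFun_comp_injective {ε : ℤ → Ω → ℝ}
    (hindep : iIndepFun ε μ)
    (J : ℕ → ℤ) (hJ : Function.Injective J) :
    iIndepFun (fun k => ε (J k)) μ := by
  rw [iIndepFun_iff_measure_inter_preimage_eq_mul] at hindep ⊢
  intro S sets hsets
  classical
  have hKJ : ∀ k : ℕ, Function.invFun J (J k) = k := fun k =>
    Function.leftInverse_invFun hJ k
  have key := hindep (S.image J) (sets := fun j => sets (Function.invFun J j))
    (fun j hj => by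
      obtain ⟨k, hk, rfl⟩ := Finset.mem_image.1 hj
      simpa [hKJ k] using hsets k hk)
  have h1 : (⋂ j ∈ S.image J, ε j ⁻¹' sets (Function.invFun J j))
      = ⋂ k ∈ S, ε (J k) ⁻¹' sets k := by
    apply Set.ext; intro ω
    simp only [Set.mem_iInter, Finset.mem_image]
    constructor
    · intro h k hk
      have := h (J k) ⟨k, hk, rfl⟩
      rwa [hKJ k] at this
    · rintro h j ⟨k, hk, rfl⟩
      rw [hKJ k]; exact h k hk
  have h2 : ∏ j ∈ S.image J, μ (ε j ⁻¹' sets (Function.invFun J j))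
      = ∏ k ∈ S, μ (ε (J k) ⁻¹' sets k) := by
    rw [Finset.prod_image (fun x _ y _ h => hJ h)]
    exact Finset.prod_congr rfl fun k _ => by rw [hKJ k]
  rw [h1, h2] at key
  exact key

/-- the characteristic function of a finite linear combination of the iid family
factors into a product. -/
lemma key_prod [IsProbabilityMeasure μ] (ε : ℤ → Ω → ℝ) (hmeas : ∀ i, Measurable (ε i))
    (hindep : iIndepFun ε μ)
    (hident : ∀ i, IdentDistrib (ε i) (ε 1) μ μ)
    (b : ℕ → ℝ) (J : ℕ → ℤ) (hJ : Function.Injective J) (s : Finset ℕ) :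
    ∫ ω, Complex.exp (Complex.I * ((∑ k ∈ s, b k * ε (J k) ω : ℝ) : ℂ)) ∂μ
      = ∏ k ∈ s, charFn μ (ε 1) (b k) := by
  classical
  have hone : ∀ k : ℕ,
      (∫ ω, Complex.exp (Complex.I * ((b k * ε (J k) ω : ℝ) : ℂ)) ∂μ)
        = charFn μ (ε 1) (b k) := by
    intro k
    have hu : Measurable fun x : ℝ => Complex.exp (Complex.I * ((b k * x : ℝ) : ℂ)) := by
      fun_prop
    exact ((hident (J k)).comp hu).integral_eq
  have hgind : iIndepFun (fun k ω => b k * ε (J k) ω) μ := by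
    have h1 := iIndepFun_comp_injective hindep J hJ
    exact h1.comp (fun k x => b k * x) (fun k => measurable_const_mul _)
  have hgm : ∀ k : ℕ, Measurable fun ω => b k * ε (J k) ω :=
    fun k => (hmeas (J k)).const_mul _
  induction s using Finset.induction_on with
  | empty => simp
  | insert i s hi ih =>
    rw [Finset.prod_insert hi, ← ih, ← hone i]
    have hsum : ∀ ω, (∑ k ∈ insert i s, b k * ε (J k) ω : ℝ)
        = (b i * ε (J i) ω) + ∑ k ∈ s, b k * ε (J k) ω := fun ω => Finset.sum_insert hi
    have hexp : ∀ ω, Complex.exp (Complex.I * ((∑ k ∈ insert i s, b k * ε (J k) ω : ℝ) : ℂ))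
        = Complex.exp (Complex.I * ((b i * ε (J i) ω : ℝ) : ℂ))
          * Complex.exp (Complex.I * ((∑ k ∈ s, b k * ε (J k) ω : ℝ) : ℂ)) := by
      intro ω
      rw [hsum ω, Complex.ofReal_add, mul_add, Complex.exp_add]
    rw [integral_congr_ae (Filter.Eventually.of_forall hexp)]
    have hABindep : IndepFun (fun ω => b i * ε (J i) ω) (fun ω => ∑ k ∈ s, b k * ε (J k) ω) μ := by
      have h := (hgind.indepFun_finsetSum_of_notMem hgm hi).symm
      have heq : (∑ j ∈ s, fun ω => b j * ε (J j) ω) = fun ω => ∑ k ∈ s, b k * ε (J k) ω := by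
        ext ω; simp [Finset.sum_apply]
      rwa [heq] at h
    exact indep_exp_mul (hgm i) (Finset.measurable_sum s fun k _ => hgm k) hABindep

/-- finite telescoping estimate for products of complex numbers of norm at most 1. -/
lemma norm_prod_sub_prod_le (A B : ℕ → ℂ) (hA : ∀ k, ‖A k‖ ≤ 1) (hB : ∀ k, ‖B k‖ ≤ 1) :
    ∀ m : ℕ, ‖(∏ k ∈ Finset.range m, A k) - ∏ k ∈ Finset.range m, B k‖
      ≤ ∑ k ∈ Finset.range m, ‖A k - B k‖ := by
  intro m
  induction m with
  | zero => simp
  | succ n ih =>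
    rw [Finset.prod_range_succ, Finset.prod_range_succ, Finset.sum_range_succ]
    have key : (∏ k ∈ Finset.range n, A k) * A n - (∏ k ∈ Finset.range n, B k) * B n
        = ((∏ k ∈ Finset.range n, A k) - ∏ k ∈ Finset.range n, B k) * A n
          + (∏ k ∈ Finset.range n, B k) * (A n - B n) := by ring
    rw [key]
    refine (norm_add_le _ _).trans ?_
    have h1 : ‖((∏ k ∈ Finset.range n, A k) - ∏ k ∈ Finset.range n, B k) * A n‖
        ≤ ∑ k ∈ Finset.range n, ‖A k - B k‖ := by
      rw [norm_mul]
      calc ‖(∏ k ∈ Finset.range n, A k) - ∏ k ∈ Finset.range n, B k‖ * ‖A n‖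
          ≤ (∑ k ∈ Finset.range n, ‖A k - B k‖) * 1 :=
            mul_le_mul ih (hA n) (norm_nonneg _) (Finset.sum_nonneg fun _ _ => norm_nonneg _)
        _ = _ := mul_one _
    have h2 : ‖(∏ k ∈ Finset.range n, B k) * (A n - B n)‖ ≤ ‖A n - B n‖ := by
      rw [norm_mul, norm_prod]
      calc (∏ k ∈ Finset.range n, ‖B k‖) * ‖A n - B n‖ ≤ 1 * ‖A n - B n‖ :=
            mul_le_mul_of_nonneg_right
              (Finset.prod_le_one (fun _ _ => norm_nonneg _) (fun k _ => hB k)) (norm_nonneg _)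
        _ = _ := one_mul _
    linarith

end Aux

set_option maxHeartbeats 1000000 in
/-- for a linear process `X_n = Σ_{i=0}^∞ a_i ε_{n−i}` with `Σ |a_i|^γ < ∞` for
some `γ ∈ (0,1]`, if `E|e^{iλε₁} − φ_ε(λ)|² ≤ c₀(|λ|^{2γ} ∧ 1)` for all `λ` and some `c₀ > 0`,
then there is `c > 0` such that for all `u, v ∈ ℝ`:
`|H₁₁(u,v)| ≤ c|uv|^γ |φ_ε(ua₀)φ_ε(va₀)| + c(|uv|^γ ∧ 1) ∏_{ℓ=1}^∞ |φ_ε((u+v)a_ℓ)|`. -/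
theorem stmt4 {Ω : Type*} [MeasurableSpace Ω] (μ : Measure Ω) [IsProbabilityMeasure μ]
    (ε : ℤ → Ω → ℝ) (hmeas : ∀ i, Measurable (ε i))
    (hindep : iIndepFun ε μ)
    (hident : ∀ i, IdentDistrib (ε i) (ε 1) μ μ)
    (a : ℕ → ℝ) (ha0 : a 0 ≠ 0)
    (X : ℤ → Ω → ℝ)
    (hX : ∀ n : ℤ, ∀ᵐ ω ∂μ, HasSum (fun i : ℕ => a i * ε (n - i) ω) (X n ω))
    (γ : ℝ) (hγ : γ ∈ Set.Ioc (0:ℝ) 1)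
    (hsum : Summable (fun i => |a i| ^ γ))
    (c₀ : ℝ) (hc₀ : 0 < c₀)
    (hcha : ∀ lam : ℝ,
      (∫ ω, ‖Complex.exp (Complex.I * (lam * ε 1 ω : ℝ)) - charFn μ (ε 1) lam‖ ^ 2 ∂μ)
        ≤ c₀ * min (|lam| ^ (2 * γ)) 1) :
    ∃ c > (0:ℝ), ∀ u v : ℝ,
      ‖Hfun μ X 1 1 u v‖
        ≤ c * |u * v| ^ γ * ‖charFn μ (ε 1) (u * a 0) * charFn μ (ε 1) (v * a 0)‖
          + c * min (|u * v| ^ γ) 1 * ∏' ℓ : ℕ, ‖charFn μ (ε 1) ((u + v) * a (ℓ + 1))‖ := by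
  classical
  obtain ⟨hγ0, hγ1⟩ := hγ
  set φe : ℝ → ℂ := charFn μ (ε 1) with hφe
  set Y : Ω → ℝ := fun ω => X 1 ω - a 0 * ε 1 ω with hYdef
  set ψ : ℝ → ℂ := fun t => ∫ ω, Complex.exp (Complex.I * ((t * Y ω : ℝ) : ℂ)) ∂μ with hψdef
  have hJ' : Function.Injective (fun k : ℕ => (1:ℤ) - ((k:ℤ) + 1)) := by
    intro x y h; simp only at h; omega
  have hJ : Function.Injective (fun k : ℕ => (1:ℤ) - (k:ℤ)) := by
    intro x y h; simp only at h; omega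
  have hYsum : ∀ᵐ ω ∂μ, HasSum (fun k : ℕ => a (k+1) * ε (1 - ((k:ℤ)+1)) ω) (Y ω) := by
    filter_upwards [hX 1] with ω h
    have h2 := (hasSum_nat_add_iff' (f := fun i : ℕ => a i * ε (1 - (i:ℤ)) ω) 1).mpr h
    simp only [Finset.range_one, Finset.sum_singleton, Nat.cast_zero, sub_zero, Nat.cast_add,
      Nat.cast_one] at h2
    exact h2
  -- convergence of the finite products to ψ
  have hA : ∀ t : ℝ, Filter.Tendsto (fun m => ∏ k ∈ Finset.range m, φe (t * a (k+1)))
      Filter.atTop (nhds (ψ t)) := by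
    intro t
    have hkey : ∀ m : ℕ, (∏ k ∈ Finset.range m, φe (t * a (k+1)))
        = ∫ ω, Complex.exp (Complex.I *
            ((∑ k ∈ Finset.range m, (t * a (k+1)) * ε (1 - ((k:ℤ)+1)) ω : ℝ) : ℂ)) ∂μ := by
      intro m
      exact (key_prod ε hmeas hindep hident (fun k => t * a (k+1))
        (fun k : ℕ => (1:ℤ) - ((k:ℤ)+1)) hJ' (Finset.range m)).symm
    simp only [hkey, hψdef]
    apply tendsto_integral_of_dominated_convergence (bound := fun _ => (1:ℝ))
    · intro m
      exact asm_exp_I (Finset.measurable_sum _ fun k _ => (hmeas _).const_mul _)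
    · exact integrable_const 1
    · intro m
      filter_upwards with ω
      exact le_of_eq (_root_.norm_exp_I_mul_ofReal _)
    · filter_upwards [hYsum] with ω hω
      have h3 := (hω.mul_left t).tendsto_sum_nat
      have h5 : Continuous fun x : ℝ => Complex.exp (Complex.I * (x : ℂ)) := by fun_prop
      have h6 := (h5.tendsto (t * Y ω)).comp h3
      simpa only [Function.comp_def, mul_assoc] using h6
  -- the characteristic function of X 1 factors
  have hB : ∀ t : ℝ, charFn μ (X 1) t = φe (t * a 0) * ψ t := by
    intro t
    have hG : Filter.Tendsto (fun m => ∏ k ∈ Finset.range m, φe (t * a k))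
        Filter.atTop (nhds (charFn μ (X 1) t)) := by
      have hkey : ∀ m : ℕ, (∏ k ∈ Finset.range m, φe (t * a k))
          = ∫ ω, Complex.exp (Complex.I *
              ((∑ k ∈ Finset.range m, (t * a k) * ε (1 - (k:ℤ)) ω : ℝ) : ℂ)) ∂μ := fun m =>
        (key_prod ε hmeas hindep hident (fun k => t * a k)
          (fun k : ℕ => (1:ℤ) - (k:ℤ)) hJ (Finset.range m)).symm
      simp only [hkey]
      show Filter.Tendsto _ _ (nhds (∫ ω, Complex.exp (Complex.I * ((t * X 1 ω : ℝ) : ℂ)) ∂μ))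
      apply tendsto_integral_of_dominated_convergence (bound := fun _ => (1:ℝ))
      · intro m; exact asm_exp_I (Finset.measurable_sum _ fun k _ => (hmeas _).const_mul _)
      · exact integrable_const 1
      · intro m; filter_upwards with ω; exact le_of_eq (_root_.norm_exp_I_mul_ofReal _)
      · filter_upwards [hX 1] with ω hω
        have h3 := (hω.mul_left t).tendsto_sum_nat
        have h5 : Continuous fun x : ℝ => Complex.exp (Complex.I * (x : ℂ)) := by fun_prop
        have h6 := (h5.tendsto (t * X 1 ω)).comp h3
        simpa only [Function.comp_def, mul_assoc] using h6
    have hG' : Filter.Tendsto (fun m => ∏ k ∈ Finset.range (m+1), φe (t * a k))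
        Filter.atTop (nhds (φe (t * a 0) * ψ t)) := by
      have h1 : ∀ m : ℕ, (∏ k ∈ Finset.range (m+1), φe (t * a k))
          = φe (t * a 0) * ∏ k ∈ Finset.range m, φe (t * a (k+1)) := by
        intro m; rw [Finset.prod_range_succ']; ring
      simp only [h1]
      exact (hA t).const_mul _
    exact tendsto_nhds_unique (hG.comp (Filter.tendsto_add_atTop_nat 1)) hG'
  -- covariance-type bound from hcha via Cauchy-Schwarz
  have two_conj : Real.HolderConjugate 2 2 := Real.HolderConjugate.two_two
  have hrpow2 : ∀ x : ℝ, 0 ≤ x → x ^ (2*γ) = (x ^ γ)^2 := by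
    intro x hx
    rw [show (2*γ) = γ*2 by ring, Real.rpow_mul hx, Real.rpow_two]
  have hminsq : ∀ x : ℝ, 0 ≤ x → min (x^2) 1 = (min x 1)^2 := by
    intro x hx
    rcases le_total x 1 with h | h
    · rw [min_eq_left (by nlinarith), min_eq_left h]
    · rw [min_eq_right (by nlinarith), min_eq_right h, one_pow]
  have hsqrtfac : ∀ α : ℝ, Real.sqrt (c₀ * min (|α| ^ (2*γ)) 1)
      = Real.sqrt c₀ * min (|α|^γ) 1 := by
    intro α
    rw [hrpow2 |α| (abs_nonneg α), hminsq _ (Real.rpow_nonneg (abs_nonneg α) γ),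
      Real.sqrt_mul hc₀.le,
      Real.sqrt_sq (le_min (Real.rpow_nonneg (abs_nonneg α) γ) zero_le_one)]
  have hcov : ∀ α β : ℝ,
      ‖φe (α + β) - φe α * φe β‖ ≤ c₀ * (min (|α|^γ) 1 * min (|β|^γ) 1) := by
    intro α β
    set f : Ω → ℂ := fun ω => Complex.exp (Complex.I * ((α * ε 1 ω : ℝ) : ℂ)) - φe α with hfd
    set g : Ω → ℂ := fun ω => Complex.exp (Complex.I * ((β * ε 1 ω : ℝ) : ℂ)) - φe β with hgd
    have hfm : AEStronglyMeasurable f μ :=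
      (asm_exp_I ((hmeas 1).const_mul α)).sub aestronglyMeasurable_const
    have hgm : AEStronglyMeasurable g μ :=
      (asm_exp_I ((hmeas 1).const_mul β)).sub aestronglyMeasurable_const
    have hfb : ∀ᵐ ω ∂μ, ‖f ω‖ ≤ 2 := by
      filter_upwards with ω
      calc ‖f ω‖ ≤ ‖Complex.exp (Complex.I * ((α * ε 1 ω : ℝ) : ℂ))‖ + ‖φe α‖ :=
            norm_sub_le _ _
        _ ≤ 1 + 1 := by
            rw [_root_.norm_exp_I_mul_ofReal]
            exact add_le_add le_rfl (norm_charFn_le_one _ _)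
        _ = 2 := by norm_num
    have hgb : ∀ᵐ ω ∂μ, ‖g ω‖ ≤ 2 := by
      filter_upwards with ω
      calc ‖g ω‖ ≤ ‖Complex.exp (Complex.I * ((β * ε 1 ω : ℝ) : ℂ))‖ + ‖φe β‖ :=
            norm_sub_le _ _
        _ ≤ 1 + 1 := by
            rw [_root_.norm_exp_I_mul_ofReal]
            exact add_le_add le_rfl (norm_charFn_le_one _ _)
        _ = 2 := by norm_num
    have emul : ∀ ω : Ω, Complex.exp (Complex.I * ((α * ε 1 ω : ℝ) : ℂ))
        * Complex.exp (Complex.I * ((β * ε 1 ω : ℝ) : ℂ))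
        = Complex.exp (Complex.I * (((α + β) * ε 1 ω : ℝ) : ℂ)) := by
      intro ω; rw [← Complex.exp_add]; congr 1; push_cast; ring
    have hint : ∫ ω, f ω * g ω ∂μ = φe (α + β) - φe α * φe β := by
      have e1 : ∀ ω, f ω * g ω
          = Complex.exp (Complex.I * (((α + β) * ε 1 ω : ℝ) : ℂ))
            - φe α * Complex.exp (Complex.I * ((β * ε 1 ω : ℝ) : ℂ))
            - Complex.exp (Complex.I * ((α * ε 1 ω : ℝ) : ℂ)) * φe β
            + φe α * φe β := by
        intro ω
        rw [hfd, hgd]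
        dsimp only
        rw [← emul ω]
        ring
      rw [integral_congr_ae (Filter.Eventually.of_forall e1)]
      have i1 : Integrable (fun ω => Complex.exp (Complex.I * (((α+β) * ε 1 ω : ℝ) : ℂ))) μ :=
        integrable_exp_I ((hmeas 1).const_mul (α+β))
      have i2 : Integrable
          (fun ω => φe α * Complex.exp (Complex.I * ((β * ε 1 ω : ℝ) : ℂ))) μ :=
        (integrable_exp_I ((hmeas 1).const_mul β)).const_mul _
      have i3 : Integrable
          (fun ω => Complex.exp (Complex.I * ((α * ε 1 ω : ℝ) : ℂ)) * φe β) μ :=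
        (integrable_exp_I ((hmeas 1).const_mul α)).mul_const _
      have i12 : Integrable (fun ω => Complex.exp (Complex.I * (((α+β) * ε 1 ω : ℝ) : ℂ))
          - φe α * Complex.exp (Complex.I * ((β * ε 1 ω : ℝ) : ℂ))) μ := i1.sub i2
      have i123 : Integrable (fun ω => (Complex.exp (Complex.I * (((α+β) * ε 1 ω : ℝ) : ℂ))
          - φe α * Complex.exp (Complex.I * ((β * ε 1 ω : ℝ) : ℂ)))
          - Complex.exp (Complex.I * ((α * ε 1 ω : ℝ) : ℂ)) * φe β) μ := i12.sub i3
      rw [integral_add i123 (integrable_const _), integral_sub i12 i3,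
        integral_sub i1 i2, integral_const_mul, integral_mul_const, integral_const]
      simp only [measure_univ, ENNReal.toReal_one, probReal_univ, one_smul]
      have hca : (∫ ω, Complex.exp (Complex.I * ((α * ε 1 ω : ℝ) : ℂ)) ∂μ) = φe α := rfl
      have hcb : (∫ ω, Complex.exp (Complex.I * ((β * ε 1 ω : ℝ) : ℂ)) ∂μ) = φe β := rfl
      have hcab : (∫ ω, Complex.exp (Complex.I * (((α+β) * ε 1 ω : ℝ) : ℂ)) ∂μ)
          = φe (α+β) := rfl
      rw [hca, hcb, hcab]; ring
    have conv2 : ∀ h : Ω → ℂ,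
        (∫ ω, ‖h ω‖ ^ (2:ℝ) ∂μ) ^ (1/(2:ℝ)) = Real.sqrt (∫ ω, ‖h ω‖ ^ 2 ∂μ) := by
      intro h
      rw [Real.sqrt_eq_rpow]
      congr 1
      simp_rw [Real.rpow_two]
    have h2 : ‖∫ ω, f ω * g ω ∂μ‖
        ≤ Real.sqrt (c₀ * min (|α| ^ (2*γ)) 1) * Real.sqrt (c₀ * min (|β| ^ (2*γ)) 1) := by
      refine (norm_integral_le_integral_norm _).trans ?_
      have hmemf : MemLp f (ENNReal.ofReal 2) μ := MemLp.of_bound hfm 2 hfb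
      have hmemg : MemLp g (ENNReal.ofReal 2) μ := MemLp.of_bound hgm 2 hgb
      have hholder := integral_mul_norm_le_Lp_mul_Lq two_conj hmemf hmemg
      calc ∫ ω, ‖f ω * g ω‖ ∂μ = ∫ ω, ‖f ω‖ * ‖g ω‖ ∂μ := by simp_rw [norm_mul]
        _ ≤ (∫ ω, ‖f ω‖ ^ (2:ℝ) ∂μ) ^ (1/(2:ℝ)) * (∫ ω, ‖g ω‖ ^ (2:ℝ) ∂μ) ^ (1/(2:ℝ)) := hholder
        _ ≤ Real.sqrt (c₀ * min (|α| ^ (2*γ)) 1) * Real.sqrt (c₀ * min (|β| ^ (2*γ)) 1) := by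
            rw [conv2 f, conv2 g]
            exact mul_le_mul (Real.sqrt_le_sqrt (hcha α)) (Real.sqrt_le_sqrt (hcha β))
              (Real.sqrt_nonneg _) (Real.sqrt_nonneg _)
    calc ‖φe (α + β) - φe α * φe β‖
        ≤ Real.sqrt (c₀ * min (|α| ^ (2*γ)) 1) * Real.sqrt (c₀ * min (|β| ^ (2*γ)) 1) := by
          rw [← hint]; exact h2
      _ = c₀ * (min (|α|^γ) 1 * min (|β|^γ) 1) := by
          rw [hsqrtfac, hsqrtfac]
          calc Real.sqrt c₀ * min (|α|^γ) 1 * (Real.sqrt c₀ * min (|β|^γ) 1)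
              = Real.sqrt c₀ * Real.sqrt c₀ * (min (|α|^γ) 1 * min (|β|^γ) 1) := by ring
            _ = c₀ * (min (|α|^γ) 1 * min (|β|^γ) 1) := by
                rw [Real.mul_self_sqrt hc₀.le]
  -- min inequalities
  have hmm : ∀ x y : ℝ, 0 ≤ x → 0 ≤ y → min x 1 * min y 1 ≤ min (x*y) 1 := by
    intro x y hx hy
    refine le_min ?_ ?_
    · exact mul_le_mul (min_le_left _ _) (min_le_left _ _) (le_min hy zero_le_one) hx
    · calc min x 1 * min y 1 ≤ 1 * 1 :=
          mul_le_mul (min_le_right _ _) (min_le_right _ _) (le_min hy zero_le_one) zero_le_one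
        _ = 1 := one_mul 1
  have hKz : ∀ K z : ℝ, 0 ≤ K → 0 ≤ z → min (K*z) 1 ≤ max K 1 * min z 1 := by
    intro K z hK hz
    rcases le_total z 1 with h | h
    · rw [min_eq_left h]
      calc min (K*z) 1 ≤ K*z := min_le_left _ _
        _ ≤ max K 1 * z := mul_le_mul_of_nonneg_right (le_max_left _ _) hz
    · rw [min_eq_right h]
      calc min (K*z) 1 ≤ 1 := min_le_right _ _
        _ ≤ max K 1 * 1 := by rw [mul_one]; exact le_max_right _ _
  -- summability of the squared tail coefficients
  have hq : Summable (fun k : ℕ => |a (k+1)| ^ γ) := by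
    have h := (summable_nat_add_iff (f := fun i => |a i| ^ γ) 1).2 hsum
    simpa using h
  obtain ⟨C, hC⟩ : ∃ C : ℝ, ∀ k : ℕ, |a (k+1)| ^ γ ≤ C := by
    obtain ⟨C, hC⟩ := hq.tendsto_atTop_zero.bddAbove_range
    exact ⟨C, fun k => hC (Set.mem_range_self k)⟩
  have hqq : Summable (fun k : ℕ => |a (k+1)| ^ γ * |a (k+1)| ^ γ) := by
    refine Summable.of_nonneg_of_le
      (fun k => mul_nonneg (Real.rpow_nonneg (abs_nonneg _) _) (Real.rpow_nonneg (abs_nonneg _) _))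
      (fun k => ?_) (hq.mul_left C)
    exact mul_le_mul_of_nonneg_right (hC k) (Real.rpow_nonneg (abs_nonneg _) _)
  set S : ℝ := ∑' k : ℕ, |a (k+1)| ^ γ * |a (k+1)| ^ γ with hSdef
  have hS0 : 0 ≤ S := tsum_nonneg fun k =>
    mul_nonneg (Real.rpow_nonneg (abs_nonneg _) _) (Real.rpow_nonneg (abs_nonneg _) _)
  -- bound on ψ(u+v) - ψ(u)ψ(v)
  have hψd : ∀ u v : ℝ, ‖ψ (u+v) - ψ u * ψ v‖ ≤ c₀ * S * |u*v| ^ γ := by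
    intro u v
    have hT : Filter.Tendsto (fun m => (∏ k ∈ Finset.range m, φe ((u+v) * a (k+1)))
        - (∏ k ∈ Finset.range m, φe (u * a (k+1))) * ∏ k ∈ Finset.range m, φe (v * a (k+1)))
        Filter.atTop (nhds (ψ (u+v) - ψ u * ψ v)) := (hA (u+v)).sub ((hA u).mul (hA v))
    refine le_of_tendsto hT.norm (Filter.Eventually.of_forall fun m => ?_)
    rw [← Finset.prod_mul_distrib]
    refine (norm_prod_sub_prod_le (fun k => φe ((u+v) * a (k+1)))
      (fun k => φe (u * a (k+1)) * φe (v * a (k+1)))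
      (fun k => norm_charFn_le_one _ _)
      (fun k => by
        rw [norm_mul]
        exact mul_le_one₀ (norm_charFn_le_one _ _) (norm_nonneg _)
          (norm_charFn_le_one _ _)) m).trans ?_
    have hterm : ∀ k ∈ Finset.range m,
        ‖φe ((u+v) * a (k+1)) - φe (u * a (k+1)) * φe (v * a (k+1))‖
          ≤ c₀ * (|a (k+1)| ^ γ * |a (k+1)| ^ γ) * |u*v| ^ γ := by
      intro k _
      have h0 : (u+v) * a (k+1) = u * a (k+1) + v * a (k+1) := by ring
      rw [h0]
      refine (hcov (u * a (k+1)) (v * a (k+1))).trans ?_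
      have h2 : min (|u * a (k+1)| ^ γ) 1 ≤ |u| ^ γ * |a (k+1)| ^ γ := by
        rw [← Real.mul_rpow (abs_nonneg u) (abs_nonneg _), ← abs_mul]
        exact min_le_left _ _
      have h3 : min (|v * a (k+1)| ^ γ) 1 ≤ |v| ^ γ * |a (k+1)| ^ γ := by
        rw [← Real.mul_rpow (abs_nonneg v) (abs_nonneg _), ← abs_mul]
        exact min_le_left _ _
      have h4 : min (|u * a (k+1)| ^ γ) 1 * min (|v * a (k+1)| ^ γ) 1
          ≤ (|a (k+1)| ^ γ * |a (k+1)| ^ γ) * |u*v| ^ γ := by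
        refine le_trans (mul_le_mul h2 h3
          (le_min (Real.rpow_nonneg (abs_nonneg _) _) zero_le_one)
          (mul_nonneg (Real.rpow_nonneg (abs_nonneg _) _)
            (Real.rpow_nonneg (abs_nonneg _) _))) ?_
        rw [abs_mul, Real.mul_rpow (abs_nonneg u) (abs_nonneg v)]
        exact le_of_eq (by ring)
      calc c₀ * (min (|u * a (k+1)| ^ γ) 1 * min (|v * a (k+1)| ^ γ) 1)
          ≤ c₀ * ((|a (k+1)| ^ γ * |a (k+1)| ^ γ) * |u*v| ^ γ) :=
            mul_le_mul_of_nonneg_left h4 hc₀.le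
        _ = c₀ * (|a (k+1)| ^ γ * |a (k+1)| ^ γ) * |u*v| ^ γ := by ring
    refine (Finset.sum_le_sum hterm).trans ?_
    have hsumeq : ∑ k ∈ Finset.range m, c₀ * (|a (k+1)| ^ γ * |a (k+1)| ^ γ) * |u*v| ^ γ
        = c₀ * (∑ k ∈ Finset.range m, |a (k+1)| ^ γ * |a (k+1)| ^ γ) * |u*v| ^ γ := by
      rw [Finset.mul_sum, Finset.sum_mul]
    rw [hsumeq]
    have hsle : (∑ k ∈ Finset.range m, |a (k+1)| ^ γ * |a (k+1)| ^ γ) ≤ S :=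
      Summable.sum_le_tsum _ (fun k _ =>
        mul_nonneg (Real.rpow_nonneg (abs_nonneg _) _) (Real.rpow_nonneg (abs_nonneg _) _)) hqq
    exact mul_le_mul_of_nonneg_right (mul_le_mul_of_nonneg_left hsle hc₀.le)
      (Real.rpow_nonneg (abs_nonneg _) _)
  -- bound on the norm of ψ by the infinite product
  have hψn : ∀ t : ℝ, ‖ψ t‖ ≤ ∏' ℓ : ℕ, ‖φe (t * a (ℓ+1))‖ := by
    intro t
    have hF : ∀ F : Finset ℕ, ‖ψ t‖ ≤ ∏ ℓ ∈ F, ‖φe (t * a (ℓ+1))‖ := by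
      intro F
      refine le_of_tendsto (hA t).norm (Filter.eventually_atTop.2 ⟨F.sup id + 1, fun m hm => ?_⟩)
      have hsub : F ⊆ Finset.range m := fun x hx =>
        Finset.mem_range.2 (lt_of_le_of_lt (Finset.le_sup (f := id) hx) (by omega))
      calc ‖∏ k ∈ Finset.range m, φe (t * a (k+1))‖
          = ∏ k ∈ Finset.range m, ‖φe (t * a (k+1))‖ := norm_prod _ _
        _ = (∏ k ∈ Finset.range m \ F, ‖φe (t * a (k+1))‖) * ∏ k ∈ F, ‖φe (t * a (k+1))‖ :=
            (Finset.prod_sdiff hsub).symm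
        _ ≤ 1 * ∏ k ∈ F, ‖φe (t * a (k+1))‖ :=
            mul_le_mul_of_nonneg_right
              (Finset.prod_le_one (fun _ _ => norm_nonneg _) (fun k _ => norm_charFn_le_one _ _))
              (Finset.prod_nonneg fun _ _ => norm_nonneg _)
        _ = ∏ k ∈ F, ‖φe (t * a (k+1))‖ := one_mul _
    by_cases hmul : Multipliable (fun ℓ : ℕ => ‖φe (t * a (ℓ+1))‖)
    · exact ge_of_tendsto hmul.hasProd (Filter.Eventually.of_forall hF)
    · rw [tprod_eq_one_of_not_multipliable hmul]
      simpa using hF ∅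
  -- assemble
  have hK1 : (0:ℝ) < c₀ * max ((|a 0| ^ γ)^2) 1 :=
    mul_pos hc₀ (lt_of_lt_of_le zero_lt_one (le_max_right _ _))
  have hcS0 : (0:ℝ) ≤ c₀ * S := mul_nonneg hc₀.le hS0
  refine ⟨c₀ * max ((|a 0| ^ γ)^2) 1 + c₀ * S + 1, by linarith, fun u v => ?_⟩
  have hcS : c₀ * S ≤ c₀ * max ((|a 0| ^ γ)^2) 1 + c₀ * S + 1 := by linarith
  have hcK : c₀ * max ((|a 0| ^ γ)^2) 1 ≤ c₀ * max ((|a 0| ^ γ)^2) 1 + c₀ * S + 1 := by linarith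
  set c : ℝ := c₀ * max ((|a 0| ^ γ)^2) 1 + c₀ * S + 1 with hcdef
  have hintegrand : ∀ ω : Ω,
      Complex.exp (Complex.I * ((u * X ((1:ℕ):ℤ) ω + v * X ((1:ℕ):ℤ) ω : ℝ) : ℂ))
        = Complex.exp (Complex.I * (((u+v) * X 1 ω : ℝ) : ℂ)) := by
    intro ω
    rw [show (u * X ((1:ℕ):ℤ) ω + v * X ((1:ℕ):ℤ) ω : ℝ) = ((u+v) * X 1 ω : ℝ) by
      push_cast; ring]
  have hH : Hfun μ X 1 1 u v = charFn μ (X 1) (u+v) - charFn μ (X 1) u * charFn μ (X 1) v := by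
    have h1 : (∫ ω, Complex.exp
          (Complex.I * ((u * X ((1:ℕ):ℤ) ω + v * X ((1:ℕ):ℤ) ω : ℝ) : ℂ)) ∂μ)
        = charFn μ (X 1) (u+v) := by
      show _ = ∫ ω, Complex.exp (Complex.I * (((u+v) * X 1 ω : ℝ) : ℂ)) ∂μ
      exact integral_congr_ae (Filter.Eventually.of_forall hintegrand)
    unfold Hfun
    rw [h1]
  rw [hH, hB (u+v), hB u, hB v]
  have hdecomp : φe ((u+v) * a 0) * ψ (u+v) - φe (u * a 0) * ψ u * (φe (v * a 0) * ψ v)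
      = (φe ((u+v) * a 0) - φe (u * a 0) * φe (v * a 0)) * ψ (u+v)
        + φe (u * a 0) * φe (v * a 0) * (ψ (u+v) - ψ u * ψ v) := by ring
  rw [hdecomp]
  refine (norm_add_le _ _).trans ?_
  rw [norm_mul, norm_mul]
  have hPi0 : (0:ℝ) ≤ ∏' ℓ : ℕ, ‖φe ((u+v) * a (ℓ+1))‖ := by
    by_cases hmul : Multipliable (fun ℓ : ℕ => ‖φe ((u+v) * a (ℓ+1))‖)
    · exact ge_of_tendsto hmul.hasProd (Filter.Eventually.of_forall fun F =>
        Finset.prod_nonneg fun _ _ => norm_nonneg _)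
    · rw [tprod_eq_one_of_not_multipliable hmul]; exact zero_le_one
  have hΔ : ‖φe ((u+v) * a 0) - φe (u * a 0) * φe (v * a 0)‖
      ≤ c₀ * max ((|a 0| ^ γ)^2) 1 * min (|u*v| ^ γ) 1 := by
    have h0 : (u+v) * a 0 = u * a 0 + v * a 0 := by ring
    rw [h0]
    refine (hcov (u * a 0) (v * a 0)).trans ?_
    have h1 : min (|u * a 0| ^ γ) 1 * min (|v * a 0| ^ γ) 1
        ≤ min ((|u * a 0| ^ γ) * (|v * a 0| ^ γ)) 1 :=
      hmm _ _ (Real.rpow_nonneg (abs_nonneg _) _) (Real.rpow_nonneg (abs_nonneg _) _)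
    have h2 : (|u * a 0| ^ γ) * (|v * a 0| ^ γ) = ((|a 0| ^ γ)^2) * (|u*v| ^ γ) := by
      rw [abs_mul, abs_mul, Real.mul_rpow (abs_nonneg u) (abs_nonneg _),
        Real.mul_rpow (abs_nonneg v) (abs_nonneg _), abs_mul,
        Real.mul_rpow (abs_nonneg u) (abs_nonneg v)]
      ring
    have h3 := hKz ((|a 0| ^ γ)^2) (|u*v| ^ γ) (by positivity)
      (Real.rpow_nonneg (abs_nonneg _) _)
    calc c₀ * (min (|u * a 0| ^ γ) 1 * min (|v * a 0| ^ γ) 1)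
        ≤ c₀ * (max ((|a 0| ^ γ)^2) 1 * min (|u*v| ^ γ) 1) := by
          refine mul_le_mul_of_nonneg_left (h1.trans ?_) hc₀.le
          rw [h2]; exact h3
      _ = c₀ * max ((|a 0| ^ γ)^2) 1 * min (|u*v| ^ γ) 1 := by ring
  have hfirst : ‖φe ((u+v) * a 0) - φe (u * a 0) * φe (v * a 0)‖ * ‖ψ (u+v)‖
      ≤ c * min (|u*v| ^ γ) 1 * ∏' ℓ : ℕ, ‖φe ((u+v) * a (ℓ+1))‖ := by
    calc ‖φe ((u+v) * a 0) - φe (u * a 0) * φe (v * a 0)‖ * ‖ψ (u+v)‖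
        ≤ (c₀ * max ((|a 0| ^ γ)^2) 1 * min (|u*v| ^ γ) 1)
            * ∏' ℓ : ℕ, ‖φe ((u+v) * a (ℓ+1))‖ :=
          mul_le_mul hΔ (hψn (u+v)) (norm_nonneg _) (by positivity)
      _ ≤ c * min (|u*v| ^ γ) 1 * ∏' ℓ : ℕ, ‖φe ((u+v) * a (ℓ+1))‖ :=
          mul_le_mul_of_nonneg_right
            (mul_le_mul_of_nonneg_right hcK
              (le_min (Real.rpow_nonneg (abs_nonneg _) _) zero_le_one)) hPi0
  have hsecond : ‖φe (u * a 0) * φe (v * a 0)‖ * ‖ψ (u+v) - ψ u * ψ v‖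
      ≤ c * |u*v| ^ γ * ‖φe (u * a 0) * φe (v * a 0)‖ := by
    calc ‖φe (u * a 0) * φe (v * a 0)‖ * ‖ψ (u+v) - ψ u * ψ v‖
        ≤ ‖φe (u * a 0) * φe (v * a 0)‖ * (c₀ * S * |u*v| ^ γ) :=
          mul_le_mul_of_nonneg_left (hψd u v) (norm_nonneg _)
      _ ≤ ‖φe (u * a 0) * φe (v * a 0)‖ * (c * |u*v| ^ γ) :=
          mul_le_mul_of_nonneg_left
            (mul_le_mul_of_nonneg_right hcS (Real.rpow_nonneg (abs_nonneg _) _))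
            (norm_nonneg _)
      _ = c * |u*v| ^ γ * ‖φe (u * a 0) * φe (v * a 0)‖ := by ring
  linarith [hfirst, hsecond]
end

section
/- Let X = Σ_{i=0}^∞ a_i ε_{−i} be a linear process in which only finitely many coefficients a_i are nonzero and at least M ≥ 1 of them are nonzero, and suppose that for some β > 0 the function u ↦ u^β φ_ε(u) belongs to L¹(ℝ) ∩ L^∞(ℝ). Then the characteristic function φ of X satisfies ∫_ℝ |u|^{Mβ} |φ(u)| du < ∞. -/
open MeasureTheory ProbabilityTheory Complex

lemma aux_integral_mul_complex {Ω : Type*} [MeasurableSpace Ω] {μ : Measure Ω} {X Y : Ω → ℂ}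
    (h : IndepFun X Y μ) (hX : Integrable X μ) (hY : Integrable Y μ)
    (hXY : Integrable (fun ω => X ω * Y ω) μ) :
    ∫ ω, X ω * Y ω ∂μ = (∫ ω, X ω ∂μ) * ∫ ω, Y ω ∂μ := by
  have hre : Measurable Complex.re := Complex.measurable_re
  have him : Measurable Complex.im := Complex.measurable_im
  have hXr := hX.re; have hXi := hX.im; have hYr := hY.re; have hYi := hY.im
  simp only [RCLike.re_to_complex, RCLike.im_to_complex] at hXr hXi hYr hYi
  have h1 : IndepFun (fun ω => (X ω).re) (fun ω => (Y ω).re) μ := h.comp hre hre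
  have h2 : IndepFun (fun ω => (X ω).re) (fun ω => (Y ω).im) μ := h.comp hre him
  have h3 : IndepFun (fun ω => (X ω).im) (fun ω => (Y ω).re) μ := h.comp him hre
  have h4 : IndepFun (fun ω => (X ω).im) (fun ω => (Y ω).im) μ := h.comp him him
  have e1 := h1.integral_fun_mul_eq_mul_integral hXr.1 hYr.1
  have e2 := h2.integral_fun_mul_eq_mul_integral hXr.1 hYi.1
  have e3 := h3.integral_fun_mul_eq_mul_integral hXi.1 hYr.1
  have e4 := h4.integral_fun_mul_eq_mul_integral hXi.1 hYi.1
  have key : ∀ {Z : Ω → ℂ}, Integrable Z μ →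
      ∫ ω, Z ω ∂μ = ((∫ ω, (Z ω).re ∂μ : ℝ) : ℂ) + ((∫ ω, (Z ω).im ∂μ : ℝ) : ℂ) * Complex.I := by
    intro Z hZ
    have := integral_re_add_im hZ
    simp only [RCLike.re_to_complex, RCLike.im_to_complex, RCLike.I_to_complex] at this
    exact this.symm
  rw [key hXY, key hX, key hY]
  have hr : (fun ω => (X ω * Y ω).re) = fun ω => (X ω).re * (Y ω).re - (X ω).im * (Y ω).im := by
    ext ω; exact Complex.mul_re _ _
  have hi : (fun ω => (X ω * Y ω).im) = fun ω => (X ω).re * (Y ω).im + (X ω).im * (Y ω).re := by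
    ext ω; exact Complex.mul_im _ _
  have i1 : Integrable (fun ω => (X ω).re * (Y ω).re) μ := h1.integrable_mul hXr hYr
  have i2 : Integrable (fun ω => (X ω).re * (Y ω).im) μ := h2.integrable_mul hXr hYi
  have i3 : Integrable (fun ω => (X ω).im * (Y ω).re) μ := h3.integrable_mul hXi hYr
  have i4 : Integrable (fun ω => (X ω).im * (Y ω).im) μ := h4.integrable_mul hXi hYi
  rw [hr, hi, integral_sub i1 i4, integral_add i2 i3, e1, e2, e3, e4]
  push_cast
  rw [Complex.ext_iff]
  constructor <;> simp

lemma aux_integral_prod {Ω : Type*} [MeasurableSpace Ω] {μ : Measure Ω} [IsProbabilityMeasure μ]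
    {Y : ℕ → Ω → ℂ} (hindep : iIndepFun Y μ)
    (hmeas : ∀ i, Measurable (Y i)) (hbdd : ∀ i ω, ‖Y i ω‖ ≤ 1) (T : Finset ℕ) :
    ∫ ω, ∏ i ∈ T, Y i ω ∂μ = ∏ i ∈ T, ∫ ω, Y i ω ∂μ := by
  have hint : ∀ (S : Finset ℕ), Integrable (fun ω => ∏ i ∈ S, Y i ω) μ := by
    intro S
    refine (integrable_const (1 : ℝ)).mono' ?_ ?_
    · exact (Finset.measurable_prod _ fun i _ => hmeas i).aestronglyMeasurable
    · refine Filter.Eventually.of_forall fun ω => ?_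
      calc ‖∏ i ∈ S, Y i ω‖ = ∏ i ∈ S, ‖Y i ω‖ := by rw [norm_prod]
        _ ≤ ∏ i ∈ S, 1 := Finset.prod_le_prod (fun _ _ => norm_nonneg _) (fun i _ => hbdd i ω)
        _ = 1 := by simp
  induction T using Finset.cons_induction with
  | empty => simp
  | cons i T hi ih =>
    have hIF : IndepFun (fun ω => ∏ j ∈ T, Y j ω) (Y i) μ := by
      have h := hindep.indepFun_finsetProd_of_notMem hmeas hi
      have : (∏ j ∈ T, Y j) = fun ω => ∏ j ∈ T, Y j ω := by ext ω; simp
      rwa [this] at h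
    simp only [Finset.prod_cons]
    rw [← ih]
    have : ∫ ω, Y i ω * ∏ j ∈ T, Y j ω ∂μ
        = (∫ ω, ∏ j ∈ T, Y j ω ∂μ) * ∫ ω, Y i ω ∂μ := by
      simp_rw [mul_comm (Y i _)]
      refine aux_integral_mul_complex hIF (hint T) ?_ ?_
      · refine (integrable_const (1 : ℝ)).mono' (hmeas i).aestronglyMeasurable
          (Filter.Eventually.of_forall fun ω => hbdd i ω)
      · refine (integrable_const (1 : ℝ)).mono' ?_ ?_
        · exact ((Finset.measurable_prod _ fun j _ => hmeas j).mul (hmeas i)).aestronglyMeasurable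
        · refine Filter.Eventually.of_forall fun ω => ?_
          calc ‖(∏ j ∈ T, Y j ω) * Y i ω‖ = ‖∏ j ∈ T, Y j ω‖ * ‖Y i ω‖ := norm_mul _ _
            _ ≤ 1 * 1 := by
                refine mul_le_mul ?_ (hbdd i ω) (norm_nonneg _) zero_le_one
                calc ‖∏ j ∈ T, Y j ω‖ = ∏ j ∈ T, ‖Y j ω‖ := by rw [norm_prod]
                  _ ≤ ∏ j ∈ T, 1 := Finset.prod_le_prod (fun _ _ => norm_nonneg _)
                      (fun j _ => hbdd j ω)
                  _ = 1 := by simp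
            _ = 1 := one_mul 1
    rw [this, mul_comm]

lemma aux_reindex {Ω : Type*} [MeasurableSpace Ω] {μ : Measure Ω}
    {ε : ℤ → Ω → ℝ} (hindep : iIndepFun ε μ) :
    iIndepFun (fun i : ℕ => ε (-(i : ℤ))) μ := by
  rw [iIndepFun_iff_measure_inter_preimage_eq_mul]
  intro S sets hsets
  classical
  have hinj : Function.Injective (fun i : ℕ => -(i : ℤ)) := by
    intro a b h
    simpa using h
  have := hindep.measure_inter_preimage_eq_mul (S.image (fun i : ℕ => -(i : ℤ)))
    (sets := fun j : ℤ => sets j.natAbs) ?_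
  · convert this using 1
    · congr 1
      ext ω
      simp only [Set.mem_iInter, Finset.mem_image]
      constructor
      · rintro h j ⟨i, hi, rfl⟩
        simpa using h i hi
      · intro h i hi
        have := h (-(i : ℤ)) ⟨i, hi, rfl⟩
        simpa using this
    · rw [Finset.prod_image (fun a _ b _ h => hinj h)]
      refine Finset.prod_congr rfl fun i _ => ?_
      simp
  · rintro j hj
    simp only [Finset.mem_image] at hj
    obtain ⟨i, hi, rfl⟩ := hj
    simpa using hsets i hi

/-- let `X = Σ_{i=0}^∞ a_i ε_{−i}` be a linear process in which only finitely
many coefficients are nonzero and at least `M ≥ 1` of them are nonzero, and suppose that for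
some `β > 0` the function `u ↦ u^β φ_ε(u)` is in `L¹(ℝ) ∩ L^∞(ℝ)`. Then the characteristic
function `φ` of `X` satisfies `∫ |u|^{Mβ} |φ(u)| du < ∞`. -/
theorem stmt14 {Ω : Type*} [MeasurableSpace Ω] (μ : Measure Ω) [IsProbabilityMeasure μ]
    (ε : ℤ → Ω → ℝ) (hmeas : ∀ i, Measurable (ε i))
    (hindep : iIndepFun ε μ)
    (hident : ∀ i, IdentDistrib (ε i) (ε 1) μ μ)
    (a : ℕ → ℝ) (hfin : {i : ℕ | a i ≠ 0}.Finite)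
    (M : ℕ) (hM : 1 ≤ M)
    (hMnonzero : ∃ s : Finset ℕ, s.card = M ∧ ∀ i ∈ s, a i ≠ 0)
    (X : Ω → ℝ)
    (hX : ∀ᵐ ω ∂μ, HasSum (fun i : ℕ => a i * ε (-(i:ℤ)) ω) (X ω))
    (β : ℝ) (hβ : 0 < β)
    (hL1 : Integrable (fun u : ℝ => |u| ^ β * ‖charFn μ (ε 1) u‖) volume)
    (hLinf : ∃ C : ℝ, ∀ u : ℝ, |u| ^ β * ‖charFn μ (ε 1) u‖ ≤ C) :
    Integrable (fun u : ℝ => |u| ^ ((M : ℝ) * β) * ‖charFn μ X u‖) volume := by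
  classical
  obtain ⟨s, hcard, hs⟩ := hMnonzero
  obtain ⟨C, hC⟩ := hLinf
  have hCnn : 0 ≤ C := le_trans (by positivity) (hC 1)
  set T : Finset ℕ := hfin.toFinset with hT
  have hsub : s ⊆ T := fun i hi => hfin.mem_toFinset.mpr (hs i hi)
  have hmexp : ∀ (c : ℝ) (i : ℤ), Measurable fun ω => Complex.exp (Complex.I * ((c * ε i ω : ℝ) : ℂ)) :=
    fun c i => Complex.measurable_exp.comp
      (((Complex.measurable_ofReal).comp ((hmeas i).const_mul c)).const_mul Complex.I)
  have hnorm_exp : ∀ x : ℝ, ‖Complex.exp (Complex.I * (x : ℂ))‖ = 1 := by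
    intro x
    rw [mul_comm]
    exact Complex.norm_exp_ofReal_mul_I x
  -- the char fn of X is the product of char fns
  have hcharX : ∀ u : ℝ, charFn μ X u = ∏ i ∈ T, charFn μ (ε 1) (u * a i) := by
    intro u
    have hXsum : ∀ᵐ ω ∂μ, X ω = ∑ i ∈ T, a i * ε (-(i : ℤ)) ω := by
      filter_upwards [hX] with ω hω
      refine hω.unique (hasSum_sum_of_ne_finset_zero ?_)
      intro i hi
      have ha : a i = 0 := by
        by_contra h
        exact hi (hfin.mem_toFinset.mpr h)
      simp [ha]
    have h1 : charFn μ X u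
        = ∫ ω, ∏ i ∈ T, Complex.exp (Complex.I * (((u * a i) * ε (-(i : ℤ)) ω : ℝ) : ℂ)) ∂μ := by
      unfold charFn
      refine integral_congr_ae ?_
      filter_upwards [hXsum] with ω hω
      rw [hω, ← Complex.exp_sum]
      congr 1
      push_cast
      rw [Finset.mul_sum, Finset.mul_sum]
      exact Finset.sum_congr rfl fun i _ => by ring
    have hY : iIndepFun
        (fun i : ℕ => fun ω => Complex.exp (Complex.I * (((u * a i) * ε (-(i : ℤ)) ω : ℝ) : ℂ))) μ := by
      exact (aux_reindex hindep).comp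
        (fun i (x : ℝ) => Complex.exp (Complex.I * (((u * a i) * x : ℝ) : ℂ)))
        (fun i => Complex.measurable_exp.comp
          (((Complex.measurable_ofReal).comp (measurable_id.const_mul (u * a i))).const_mul
            Complex.I))
    rw [h1, aux_integral_prod hY (fun i => hmexp (u * a i) _)
      (fun i ω => le_of_eq (hnorm_exp _)) T]
    refine Finset.prod_congr rfl fun i _ => ?_
    have hg : Measurable fun x : ℝ => Complex.exp (Complex.I * (((u * a i) * x : ℝ) : ℂ)) :=
      Complex.measurable_exp.comp
        (((Complex.measurable_ofReal).comp (measurable_id.const_mul (u * a i))).const_mul Complex.I)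
    have := ((hident (-(i : ℤ))).comp hg).integral_eq
    simpa [charFn, Function.comp] using this
  -- char fns are bounded by 1
  have hφle : ∀ (Z : Ω → ℝ) (t : ℝ), ‖charFn μ Z t‖ ≤ 1 := by
    intro Z t
    unfold charFn
    calc ‖∫ ω, Complex.exp (Complex.I * ((t * Z ω : ℝ) : ℂ)) ∂μ‖
        ≤ ∫ ω, ‖Complex.exp (Complex.I * ((t * Z ω : ℝ) : ℂ))‖ ∂μ := norm_integral_le_integral_norm _
      _ = ∫ _, (1 : ℝ) ∂μ := by
          refine integral_congr_ae (Filter.Eventually.of_forall fun ω => ?_)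
          exact hnorm_exp _
      _ = 1 := by simp
  -- continuity of the char fn of ε 1
  have hφcont : Continuous (charFn μ (ε 1)) := by
    unfold charFn
    refine continuous_of_dominated (bound := fun _ => (1 : ℝ)) ?_ ?_ (integrable_const 1) ?_
    · exact fun t => (hmexp t 1).aestronglyMeasurable
    · exact fun t => Filter.Eventually.of_forall fun ω => le_of_eq (hnorm_exp _)
    · refine Filter.Eventually.of_forall fun ω => ?_
      exact Complex.continuous_exp.comp
        (continuous_const.mul (Complex.continuous_ofReal.comp
          (continuous_id.mul continuous_const)))
  -- pick an index in s
  have hsne : s.Nonempty := Finset.card_pos.mp (by omega)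
  obtain ⟨i0, hi0⟩ := hsne
  have ha0 : a i0 ≠ 0 := hs i0 hi0
  set G : ℝ → ℝ := fun v => |v| ^ β * ‖charFn μ (ε 1) v‖ with hG
  have hGnn : ∀ v, 0 ≤ G v := fun v => by positivity
  set K : ℝ := (∏ i ∈ s, (|a i| ^ β)⁻¹) * C ^ (s.erase i0).card with hK
  -- pointwise bound
  have hbound : ∀ u : ℝ, |u| ^ ((M : ℝ) * β) * ‖charFn μ X u‖ ≤ K * G (u * a i0) := by
    intro u
    calc |u| ^ ((M : ℝ) * β) * ‖charFn μ X u‖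
        = |u| ^ ((M : ℝ) * β) * ∏ i ∈ T, ‖charFn μ (ε 1) (u * a i)‖ := by
          rw [hcharX u, norm_prod]
      _ ≤ |u| ^ ((M : ℝ) * β) * ∏ i ∈ s, ‖charFn μ (ε 1) (u * a i)‖ := by
          refine mul_le_mul_of_nonneg_left ?_ (by positivity)
          rw [← Finset.prod_sdiff hsub]
          exact mul_le_of_le_one_left (Finset.prod_nonneg fun i _ => norm_nonneg _)
            (Finset.prod_le_one (fun i _ => norm_nonneg _) (fun i _ => hφle _ _))
      _ = ∏ i ∈ s, (|u| ^ β * ‖charFn μ (ε 1) (u * a i)‖) := by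
          rw [Finset.prod_mul_distrib, Finset.prod_const, hcard]
          congr 1
          rw [mul_comm, Real.rpow_mul (abs_nonneg u), Real.rpow_natCast]
      _ = (∏ i ∈ s, (|a i| ^ β)⁻¹) * ∏ i ∈ s, G (u * a i) := by
          rw [← Finset.prod_mul_distrib]
          refine Finset.prod_congr rfl fun i hi => ?_
          have hpos : 0 < |a i| ^ β := Real.rpow_pos_of_pos (abs_pos.mpr (hs i hi)) β
          rw [hG]
          simp only []
          rw [abs_mul, Real.mul_rpow (abs_nonneg u) (abs_nonneg _)]
          field_simp
      _ ≤ (∏ i ∈ s, (|a i| ^ β)⁻¹) * (G (u * a i0) * C ^ (s.erase i0).card) := by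
          refine mul_le_mul_of_nonneg_left ?_
            (Finset.prod_nonneg fun i _ => by positivity)
          rw [← Finset.mul_prod_erase s _ hi0]
          refine mul_le_mul_of_nonneg_left ?_ (hGnn _)
          calc ∏ i ∈ s.erase i0, G (u * a i)
              ≤ ∏ i ∈ s.erase i0, C :=
                Finset.prod_le_prod (fun i _ => hGnn _) (fun i _ => hC _)
            _ = C ^ (s.erase i0).card := Finset.prod_const C
      _ = K * G (u * a i0) := by rw [hK]; ring
  -- conclude
  have hmaj : Integrable (fun u : ℝ => K * G (u * a i0)) volume :=
    (hL1.comp_mul_right' ha0).const_mul K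
  refine hmaj.mono' ?_ ?_
  · have heq : (fun u : ℝ => |u| ^ ((M : ℝ) * β) * ‖charFn μ X u‖)
        = fun u : ℝ => |u| ^ ((M : ℝ) * β) * ‖∏ i ∈ T, charFn μ (ε 1) (u * a i)‖ :=
      funext fun u => by rw [hcharX u]
    rw [heq]
    have hcont : Continuous fun u : ℝ => |u| ^ ((M : ℝ) * β) *
        ‖∏ i ∈ T, charFn μ (ε 1) (u * a i)‖ := by
      refine Continuous.mul ?_ ?_
      · exact (Real.continuous_rpow_const (by positivity)).comp continuous_abs
      · exact continuous_norm.comp (continuous_finset_prod _ fun i _ =>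
          hφcont.comp (continuous_id.mul continuous_const))
    exact hcont.aestronglyMeasurable
  · refine Filter.Eventually.of_forall fun u => ?_
    rw [Real.norm_of_nonneg (by positivity)]
    exact hbound u
end
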